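/- Let A = (a_{ij}) be a real symmetric n×n matrix with positive diagonal entries such that √(a_{ii} a_{jj}) > (n-1)|a_{ij}| for all i ≠ j. Then A is positive definite. -/

import Mathlib

theorem posDef_of_diag_domination (n : ℕ) (hn : 1 ≤ n)
    (A : Matrix (Fin n) (Fin n) ℝ) (hsym : A.IsSymm)
    (hdiag : ∀ i, 0 < A i i)
    (hdom : ∀ i j, i ≠ j → ((n : ℝ) - 1) * |A i j| < Real.sqrt (A i i * A j j)) :
    A.PosDef := by
  rw [Matrix.posDef_iff_dotProduct_mulVec]
  constructor
  · exact hsym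
  intro x hx
  obtain ⟨k, hk⟩ := Function.ne_iff.mp hx
  simp only [Pi.zero_apply] at hk
  simp only [star_trivial]
  have hQ : dotProduct x (A.mulVec x)
      = ∑ i, ∑ j, x i * (A i j * x j) := by
    simp [dotProduct, Matrix.mulVec, Finset.mul_sum]
  rw [hQ]
  set b : Fin n → ℝ := fun i => A i i * x i ^ 2 with hb
  have hbpos : ∀ i, x i ≠ 0 → 0 < b i := fun i hi =>
    mul_pos (hdiag i) (by positivity)
  have hbnn : ∀ i, 0 ≤ b i := fun i => mul_nonneg (hdiag i).le (sq_nonneg _)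
  rcases eq_or_lt_of_le hn with h1 | h2
  · -- n = 1 case
    subst h1
    have hk0 : k = 0 := Subsingleton.elim k 0
    subst hk0
    simp only [Fin.sum_univ_one]
    nlinarith [hdiag 0, mul_self_pos.mpr hk]
  · -- n ≥ 2
    have hn2 : (2 : ℕ) ≤ n := h2
    have hc : (0:ℝ) < (n:ℝ) - 1 := by
      have : (1:ℝ) < n := by exact_mod_cast h2
      linarith
    set c : ℝ := ((n:ℝ) - 1)⁻¹ with hcdef
    have hcpos : 0 < c := inv_pos.mpr hc
    have hc1 : ((n:ℝ) - 1) * c = 1 := mul_inv_cancel₀ hc.ne'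
    have hAij : ∀ i j, i ≠ j →
        |A i j| ≤ c * (Real.sqrt (A i i) * Real.sqrt (A j j)) := by
      intro i j hij
      have h := hdom i j hij
      rw [Real.sqrt_mul (hdiag i).le] at h
      calc |A i j| = c * (((n:ℝ) - 1) * |A i j|) := by
            rw [← mul_assoc, mul_comm c ((n:ℝ) - 1), hc1, one_mul]
          _ ≤ c * (Real.sqrt (A i i) * Real.sqrt (A j j)) :=
            mul_le_mul_of_nonneg_left h.le hcpos.le
    have hsq : ∀ i, Real.sqrt (A i i) ^ 2 = A i i := fun i => Real.sq_sqrt (hdiag i).le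
    -- per-term bounds
    have key : ∀ i j, i ≠ j → -(c / 2 * (b i + b j)) ≤ x i * (A i j * x j) := by
      intro i j hij
      have h1 : -(|A i j| * (|x i| * |x j|)) ≤ x i * (A i j * x j) := by
        have := neg_abs_le (x i * (A i j * x j))
        calc -(|A i j| * (|x i| * |x j|)) = -|x i * (A i j * x j)| := by
              rw [abs_mul, abs_mul]; ring
          _ ≤ _ := neg_abs_le _
      have h2 : |A i j| * (|x i| * |x j|)
          ≤ c * (Real.sqrt (A i i) * Real.sqrt (A j j)) * (|x i| * |x j|) :=
        mul_le_mul_of_nonneg_right (hAij i j hij) (by positivity)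
      have h3 : c * (Real.sqrt (A i i) * Real.sqrt (A j j)) * (|x i| * |x j|)
          ≤ c / 2 * (b i + b j) := by
        have hs := sq_nonneg (Real.sqrt (A i i) * |x i| - Real.sqrt (A j j) * |x j|)
        have hui : (Real.sqrt (A i i) * |x i|) ^ 2 = b i := by
          rw [mul_pow, hsq i, sq_abs]
        have huj : (Real.sqrt (A j j) * |x j|) ^ 2 = b j := by
          rw [mul_pow, hsq j, sq_abs]
        nlinarith [hcpos]
      linarith
    have keystrict : ∀ j, j ≠ k → -(c / 2 * (b k + b j)) < x k * (A k j * x j) := by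
      intro j hj
      by_cases hxj : x j = 0
      · have hbj : b j = 0 := by rw [hb]; simp [hxj]
        have : x k * (A k j * x j) = 0 := by rw [hxj]; ring
        rw [this, hbj, add_zero]
        nlinarith [hbpos k hk, hcpos]
      · have h1 : -(|A k j| * (|x k| * |x j|)) ≤ x k * (A k j * x j) := by
          calc -(|A k j| * (|x k| * |x j|)) = -|x k * (A k j * x j)| := by
                rw [abs_mul, abs_mul]; ring
            _ ≤ _ := neg_abs_le _
        have hpos : 0 < |x k| * |x j| := by positivity
        have h2 : |A k j| * (|x k| * |x j|)
            < c * (Real.sqrt (A k k) * Real.sqrt (A j j)) * (|x k| * |x j|) := by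
          apply mul_lt_mul_of_pos_right _ hpos
          have h := hdom k j (fun h => hj h.symm)
          rw [Real.sqrt_mul (hdiag k).le] at h
          calc |A k j| = c * (((n:ℝ) - 1) * |A k j|) := by
                rw [← mul_assoc, mul_comm c ((n:ℝ) - 1), hc1, one_mul]
            _ < c * (Real.sqrt (A k k) * Real.sqrt (A j j)) :=
              mul_lt_mul_of_pos_left h hcpos
        have h3 : c * (Real.sqrt (A k k) * Real.sqrt (A j j)) * (|x k| * |x j|)
            ≤ c / 2 * (b k + b j) := by
          have hs := sq_nonneg (Real.sqrt (A k k) * |x k| - Real.sqrt (A j j) * |x j|)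
          have hui : (Real.sqrt (A k k) * |x k|) ^ 2 = b k := by
            rw [mul_pow, hsq k, sq_abs]
          have huj : (Real.sqrt (A j j) * |x j|) ^ 2 = b j := by
            rw [mul_pow, hsq j, sq_abs]
          nlinarith [hcpos]
        linarith
    set S : ℝ := ∑ i, b i with hS
    set L : Fin n → ℝ :=
      fun i => b i - c / 2 * (((n:ℝ) - 1) * b i + (S - b i)) with hL
    have hsum_erase : ∀ i : Fin n,
        ∑ j ∈ Finset.univ.erase i, (b i + b j) = ((n:ℝ) - 1) * b i + (S - b i) := by
      intro i
      rw [Finset.sum_add_distrib, Finset.sum_const,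
        Finset.card_erase_of_mem (Finset.mem_univ i), Finset.card_univ,
        Fintype.card_fin, nsmul_eq_mul, Nat.cast_sub hn, Nat.cast_one,
        Finset.sum_erase_eq_sub (Finset.mem_univ i)]
    have hLrow : ∀ i : Fin n,
        L i = b i + ∑ j ∈ Finset.univ.erase i, -(c / 2 * (b i + b j)) := by
      intro i
      rw [Finset.sum_neg_distrib, ← Finset.mul_sum, hsum_erase i]
      ring
    have hdiagterm : ∀ i : Fin n, x i * (A i i * x i) = b i := by
      intro i; rw [hb]; ring
    have hrow_le : ∀ i : Fin n, L i ≤ ∑ j, x i * (A i j * x j) := by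
      intro i
      rw [hLrow i, ← Finset.add_sum_erase _ _ (Finset.mem_univ i), hdiagterm i]
      exact add_le_add_right (Finset.sum_le_sum fun j hj =>
        key i j (fun h => (Finset.mem_erase.mp hj).1 h.symm)) _
    have hrow_lt : L k < ∑ j, x k * (A k j * x j) := by
      rw [hLrow k, ← Finset.add_sum_erase _ _ (Finset.mem_univ k), hdiagterm k]
      apply add_lt_add_right
      apply Finset.sum_lt_sum_of_nonempty
      · rw [← Finset.card_pos, Finset.card_erase_of_mem (Finset.mem_univ k),
          Finset.card_univ, Fintype.card_fin]
        omega
      · exact fun j hj => keystrict j (Finset.mem_erase.mp hj).1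
    have hsum_lt : ∑ i, L i < ∑ i, ∑ j, x i * (A i j * x j) :=
      Finset.sum_lt_sum (fun i _ => hrow_le i) ⟨k, Finset.mem_univ k, hrow_lt⟩
    have hSL : ∑ i, L i = 0 := by
      have h1 : ∀ i, L i = (1 - c / 2 * ((n:ℝ) - 1) + c / 2) * b i - c / 2 * S :=
        fun i => by rw [hL]; ring
      rw [Finset.sum_congr rfl (fun i _ => h1 i), Finset.sum_sub_distrib,
        ← Finset.mul_sum, ← hS, Finset.sum_const, Finset.card_univ,
        Fintype.card_fin, nsmul_eq_mul]
      linear_combination (-S) * hc1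
    linarith
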